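/- Let (X, Y, ⟨·,·⟩) be a dual pairing, h : X → ℝ ∪ {+∞}, and (x,y) ∈ X × Y. Then χ⁽∞⁾_{∂h}(x,y) ≥ (h + ι_{D(∂h)})(x) + (h* + ι_{R(∂h)})(y), where χ⁽∞⁾_{∂h} = inf_{n≥1} χ⁽ⁿ⁾_{∂h}. -/

import Mathlib

open scoped Classical

variable {X Y : Type*} [AddCommGroup X] [Module ℝ X] [AddCommGroup Y] [Module ℝ Y]

/-- `y` is a subgradient of `h : X → ℝ ∪ {+∞}` at `x`. -/
def IsSubgrad (b : X →ₗ[ℝ] Y →ₗ[ℝ] ℝ) (h : X → EReal) (x : X) (y : Y) : Prop :=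
  ∃ s : ℝ, h x = (s : EReal) ∧ ∀ w : X, ((b (w - x) y : ℝ) : EReal) + (s : EReal) ≤ h w

/-- The convex conjugate `h*` with respect to the pairing. -/
noncomputable def conj (b : X →ₗ[ℝ] Y →ₗ[ℝ] ℝ) (h : X → EReal) (y : Y) : EReal :=
  ⨆ x : X, (((b x y : ℝ) : EReal) - h x)

/-- The set of values over which `χ⁽∞⁾_{∂h}(x,y) = inf_{n ≥ 1} χ⁽ⁿ⁾_{∂h}(x,y)` is
taken: the `n = 1` value `⟨x,y⟩` (when `(x,y) ∈ Graph ∂h`), and for `n ≥ 2` the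
values `⟨x₁,y⟩ + ∑ᵢ₌₂ⁿ⁻¹⟨xᵢ-xᵢ₋₁,yᵢ⟩ + ⟨x-xₙ₋₁,yₙ⟩` over admissible chains. -/
def chiInfSet (b : X →ₗ[ℝ] Y →ₗ[ℝ] ℝ) (h : X → EReal) (x : X) (y : Y) :
    Set EReal :=
  {r | (IsSubgrad b h x y ∧ r = ((b x y : ℝ) : EReal)) ∨
    (∃ n : ℕ, 2 ≤ n ∧ ∃ c : ℕ → X × Y,
      IsSubgrad b h (c 1).1 y ∧ IsSubgrad b h x (c n).2 ∧
      (∀ i ∈ Finset.Icc 2 (n - 1), IsSubgrad b h (c i).1 (c i).2) ∧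
      r = ((b (c 1).1 y
          + ∑ i ∈ Finset.Icc 2 (n - 1), b ((c i).1 - (c (i - 1)).1) (c i).2
          + b (x - (c (n - 1)).1) (c n).2 : ℝ) : EReal))}

lemma conj_le_of_subgrad (b : X →ₗ[ℝ] Y →ₗ[ℝ] ℝ) (h : X → EReal)
    (hbot : ∀ x : X, h x ≠ ⊥) {u : X} {y : Y} {s : ℝ}
    (hsub : ∀ w : X, ((b (w - u) y : ℝ) : EReal) + (s : EReal) ≤ h w) :
    conj b h y ≤ ((b u y - s : ℝ) : EReal) := by
  refine iSup_le fun w => ?_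
  have hw := hsub w
  cases hhw : h w with
  | bot => exact absurd hhw (hbot w)
  | top => rw [EReal.sub_top]; exact bot_le
  | coe t =>
    rw [hhw] at hw
    rw [← EReal.coe_sub, EReal.coe_le_coe_iff]
    have h1 : b (w - u) y + s ≤ t := by exact_mod_cast hw
    have hb : b (w - u) y = b w y - b u y := by simp [map_sub]
    linarith

/-- `χ⁽∞⁾_{∂h}(x,y) ≥ (h + ι_{D(∂h)})(x) + (h* + ι_{R(∂h)})(y)`. -/
theorem chiInf_ge (b : X →ₗ[ℝ] Y →ₗ[ℝ] ℝ) (h : X → EReal)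
    (hbot : ∀ x : X, h x ≠ ⊥) (x : X) (y : Y) :
    (h x + (if ∃ v : Y, IsSubgrad b h x v then (0 : EReal) else ⊤))
      + (conj b h y + (if ∃ u : X, IsSubgrad b h u y then (0 : EReal) else ⊤))
      ≤ sInf (chiInfSet b h x y) := by
  refine le_sInf fun r hr => ?_
  rcases hr with ⟨⟨s, hs, hsub⟩, rfl⟩ |
    ⟨n, hn, c, ⟨s1, hs1, hsub1⟩, ⟨sx, hsx, hsubx⟩, hchain, rfl⟩
  · -- n = 1 case
    rw [if_pos ⟨y, s, hs, hsub⟩, if_pos ⟨x, s, hs, hsub⟩, add_zero, add_zero, hs]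
    have hc := conj_le_of_subgrad b h hbot hsub
    calc (s : EReal) + conj b h y ≤ (s : EReal) + ((b x y - s : ℝ) : EReal) :=
          add_le_add_right hc _
      _ = ((b x y : ℝ) : EReal) := by rw [← EReal.coe_add]; norm_num
  · -- chain case
    rw [if_pos ⟨(c n).2, sx, hsx, hsubx⟩, if_pos ⟨(c 1).1, s1, hs1, hsub1⟩,
      add_zero, add_zero, hsx]
    -- real value of h along the chain
    set f : ℕ → ℝ := fun i => (h (c i).1).toReal with hf
    have hf1 : f 1 = s1 := by simp [hf, hs1]
    have hreal : ∀ i, i = 1 ∨ i ∈ Finset.Icc 2 (n - 1) → h (c i).1 = ((f i : ℝ) : EReal) := by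
      rintro i (rfl | hi)
      · rw [hf1]; exact hs1
      · obtain ⟨si, hsi, -⟩ := hchain i hi
        rw [hsi]; simp [hf, hsi]
    have hsubc : ∀ i ∈ Finset.Icc 2 (n - 1),
        ∀ w : X, ((b (w - (c i).1) (c i).2 : ℝ) : EReal) + ((f i : ℝ) : EReal) ≤ h w := by
      intro i hi w
      obtain ⟨si, hsi, hsubi⟩ := hchain i hi
      have : f i = si := by simp [hf, hsi]
      rw [this]; exact hsubi w
    -- per-term bounds
    have hterm : ∀ i ∈ Finset.Icc 2 (n - 1),
        f i - f (i - 1) ≤ b ((c i).1 - (c (i - 1)).1) (c i).2 := by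
      intro i hi
      have hi' := Finset.mem_Icc.mp hi
      have hprev : h (c (i - 1)).1 = ((f (i - 1) : ℝ) : EReal) := by
        refine hreal (i - 1) ?_
        rcases Nat.eq_or_lt_of_le hi'.1 with h2 | h2
        · left; omega
        · right; rw [Finset.mem_Icc]; omega
      have := hsubc i hi (c (i - 1)).1
      rw [hprev] at this
      have h1 : b ((c (i - 1)).1 - (c i).1) (c i).2 + f i ≤ f (i - 1) := by
        exact_mod_cast this
      have hb : b ((c (i - 1)).1 - (c i).1) (c i).2
          = - b ((c i).1 - (c (i - 1)).1) (c i).2 := by simp [map_sub]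
      linarith
    -- telescoping
    have hIcc : Finset.Icc 2 (n - 1) = Finset.Ico 2 n := by
      ext i; simp [Finset.mem_Icc, Finset.mem_Ico]; omega
    have htel : ∑ i ∈ Finset.Icc 2 (n - 1), (f i - f (i - 1)) = f (n - 1) - f 1 := by
      rw [hIcc, Finset.sum_Ico_eq_sum_range]
      have : ∀ k ∈ Finset.range (n - 2), f (2 + k) - f (2 + k - 1)
          = (fun j => f (j + 1)) (k + 1) - (fun j => f (j + 1)) k := by
        intro k _; simp only
        congr 2 <;> omega
      rw [Finset.sum_congr rfl this, Finset.sum_range_sub (fun j => f (j + 1))]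
      congr 2; omega
    have hsum : f (n - 1) - f 1
        ≤ ∑ i ∈ Finset.Icc 2 (n - 1), b ((c i).1 - (c (i - 1)).1) (c i).2 := by
      rw [← htel]; exact Finset.sum_le_sum hterm
    -- last term
    have hlast : sx - f (n - 1) ≤ b (x - (c (n - 1)).1) (c n).2 := by
      have hprev : h (c (n - 1)).1 = ((f (n - 1) : ℝ) : EReal) := by
        refine hreal (n - 1) ?_
        rcases Nat.eq_or_lt_of_le hn with h2 | h2
        · left; omega
        · right; rw [Finset.mem_Icc]; omega
      have := hsubx (c (n - 1)).1
      rw [hprev] at this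
      have h1 : b ((c (n - 1)).1 - x) (c n).2 + sx ≤ f (n - 1) := by exact_mod_cast this
      have hb : b ((c (n - 1)).1 - x) (c n).2 = - b (x - (c (n - 1)).1) (c n).2 := by
        simp [map_sub]
      linarith
    -- conjugate bound
    have hc : conj b h y ≤ ((b (c 1).1 y - s1 : ℝ) : EReal) := conj_le_of_subgrad b h hbot hsub1
    -- assemble
    have hreal_ineq : sx + (b (c 1).1 y - s1)
        ≤ b (c 1).1 y
          + ∑ i ∈ Finset.Icc 2 (n - 1), b ((c i).1 - (c (i - 1)).1) (c i).2
          + b (x - (c (n - 1)).1) (c n).2 := by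
      have := hf1
      linarith
    calc (sx : EReal) + conj b h y
        ≤ (sx : EReal) + ((b (c 1).1 y - s1 : ℝ) : EReal) := add_le_add_right hc _
      _ = ((sx + (b (c 1).1 y - s1) : ℝ) : EReal) := by rw [← EReal.coe_add]
      _ ≤ _ := by exact_mod_cast hreal_ineq
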